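/- Let H be a separable complex Hilbert space, {S_γ}_{γ∈Γ} a family of closed subspaces of H, χ = ∪_{γ∈Γ} S_γ, and S̄_{γ,θ} the closure of S_γ + S_θ. Let Ψ = {ψ_i}_{i∈I} be a Bessel sequence in H and A its sampling operator. Then A is stable on χ with constants α and β if and only if for every γ,θ ∈ Γ the family {P_{S̄_{γ,θ}} ψ_i}_{i∈I} is a frame for S̄_{γ,θ} with the same constants α and β. -/

import Mathlib

open scoped ComplexInnerProductSpace

private lemma proj_inner_eq {H : Type*} [NormedAddCommGroup H] [InnerProductSpace ℂ H]
    [CompleteSpace H]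
    (K : Submodule ℂ H) [CompleteSpace K] (v h : H) (hh : h ∈ K) :
    ⟪(K.orthogonalProjection v : H), h⟫ = ⟪v, h⟫ := by
  have hmem : v - (K.orthogonalProjection v : H) ∈ Kᗮ :=
    K.sub_starProjection_mem_orthogonal v
  have h0 : ⟪h, v - (K.orthogonalProjection v : H)⟫ = 0 := hmem h hh
  have h1 : ⟪v - (K.orthogonalProjection v : H), h⟫ = 0 := by
    rw [← inner_conj_symm, h0, map_zero]
  rw [inner_sub_left] at h1
  linear_combination -h1

private lemma lp_norm_sq {I : Type*} [Countable I] (f : lp (fun _ : I => ℂ) 2) :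
    ‖f‖ ^ 2 = ∑' i, ‖f i‖ ^ 2 := by
  have h := lp.norm_rpow_eq_tsum (p := 2) (by norm_num) f
  simp only [ENNReal.toReal_ofNat] at h
  rw [show ((2:ℝ)) = ((2:ℕ):ℝ) by norm_num] at h
  simp only [Real.rpow_natCast] at h
  exact_mod_cast h

/-- Let `{S γ}_{γ ∈ Γ}` be a family of closed subspaces of a separable complex
Hilbert space `H`, `χ = ⋃ γ, S γ`, and `S̄_{γ,θ}` the closure of `S γ + S θ`.  Let `Ψ` be a
Bessel sequence in `H` and `A` its sampling operator.  Then `A` is stable on `χ` with constants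
`α` and `β` if and only if for every `γ, θ ∈ Γ` the family `{P_{S̄_{γ,θ}} ψ i}_{i ∈ I}` is a
frame for `S̄_{γ,θ}` with the same constants `α` and `β`. -/
theorem stmt_6
    {H : Type*} [NormedAddCommGroup H] [InnerProductSpace ℂ H] [CompleteSpace H]
    [SecondCountableTopology H]
    {I : Type*} [Countable I]
    {Γ : Type*} (S : Γ → Submodule ℂ H) (hS : ∀ γ, IsClosed ((S γ : Submodule ℂ H) : Set H))
    (ψ : I → H) (B : ℝ) (hB : 0 < B)
    (hBessel : ∀ h : H, ∑' i : I, ‖⟪ψ i, h⟫‖ ^ 2 ≤ B * ‖h‖ ^ 2)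
    (A : H →L[ℂ] lp (fun _ : I => ℂ) 2)
    (hA : ∀ f : H, ∀ i : I, A f i = ⟪ψ i, f⟫)
    (α β : ℝ) (hα : 0 < α) (hαβ : α ≤ β) :
    (∀ x₁ ∈ ⋃ γ : Γ, (S γ : Set H), ∀ x₂ ∈ ⋃ γ : Γ, (S γ : Set H),
        α * ‖x₁ - x₂‖ ^ 2 ≤ ‖A x₁ - A x₂‖ ^ 2 ∧ ‖A x₁ - A x₂‖ ^ 2 ≤ β * ‖x₁ - x₂‖ ^ 2) ↔
      (∀ γ θ : Γ, ∀ h ∈ (S γ ⊔ S θ : Submodule ℂ H).topologicalClosure,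
        α * ‖h‖ ^ 2 ≤ ∑' i : I,
            ‖⟪((S γ ⊔ S θ : Submodule ℂ H).topologicalClosure.orthogonalProjection (ψ i) : H),
              h⟫‖ ^ 2 ∧
          ∑' i : I,
            ‖⟪((S γ ⊔ S θ : Submodule ℂ H).topologicalClosure.orthogonalProjection (ψ i) : H),
              h⟫‖ ^ 2 ≤ β * ‖h‖ ^ 2) := by
  -- ‖A f‖² equals the sum of squares of samples
  have hAnorm : ∀ f : H, ‖A f‖ ^ 2 = ∑' i : I, ‖⟪ψ i, f⟫‖ ^ 2 := by
    intro f
    rw [lp_norm_sq (A f)]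
    exact tsum_congr fun i => by rw [hA f i]
  -- projections don't change inner products against members of the closure
  have hproj : ∀ γ θ : Γ, ∀ h ∈ (S γ ⊔ S θ : Submodule ℂ H).topologicalClosure,
      (∑' i : I,
          ‖⟪((S γ ⊔ S θ : Submodule ℂ H).topologicalClosure.orthogonalProjection (ψ i) : H),
            h⟫‖ ^ 2) = ‖A h‖ ^ 2 := by
    intro γ θ h hh
    rw [hAnorm h]
    haveI : CompleteSpace ((S γ ⊔ S θ : Submodule ℂ H).topologicalClosure) :=
      (Submodule.isClosed_topologicalClosure _).completeSpace_coe
    exact tsum_congr fun i => by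
      rw [proj_inner_eq ((S γ ⊔ S θ : Submodule ℂ H).topologicalClosure) (ψ i) h hh]
  constructor
  · intro hst γ θ h hh
    -- the set where the frame inequalities hold is closed and contains S γ ⊔ S θ
    have key : ∀ h ∈ (S γ ⊔ S θ : Submodule ℂ H),
        α * ‖h‖ ^ 2 ≤ ‖A h‖ ^ 2 ∧ ‖A h‖ ^ 2 ≤ β * ‖h‖ ^ 2 := by
      intro h hh
      rcases Submodule.mem_sup.mp hh with ⟨a, ha, b, hb, rfl⟩
      have h1 : a ∈ ⋃ γ : Γ, (S γ : Set H) := Set.mem_iUnion.mpr ⟨γ, ha⟩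
      have h2 : -b ∈ ⋃ γ : Γ, (S γ : Set H) := Set.mem_iUnion.mpr ⟨θ, (S θ).neg_mem hb⟩
      have := hst a h1 (-b) h2
      simpa [sub_neg_eq_add, map_add, map_neg] using this
    have c0 : Continuous fun h : H => ‖A h‖ ^ 2 := by fun_prop
    have c1 : Continuous fun h : H => α * ‖h‖ ^ 2 := by fun_prop
    have c2 : Continuous fun h : H => β * ‖h‖ ^ 2 := by fun_prop
    have hclosed : IsClosed {h : H | α * ‖h‖ ^ 2 ≤ ‖A h‖ ^ 2 ∧ ‖A h‖ ^ 2 ≤ β * ‖h‖ ^ 2} :=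
      IsClosed.inter (isClosed_le c1 c0) (isClosed_le c0 c2)
    have hsub : ((S γ ⊔ S θ : Submodule ℂ H) : Set H) ⊆
        {h : H | α * ‖h‖ ^ 2 ≤ ‖A h‖ ^ 2 ∧ ‖A h‖ ^ 2 ≤ β * ‖h‖ ^ 2} := key
    have hcl : (((S γ ⊔ S θ : Submodule ℂ H).topologicalClosure : Submodule ℂ H) : Set H) ⊆
        {h : H | α * ‖h‖ ^ 2 ≤ ‖A h‖ ^ 2 ∧ ‖A h‖ ^ 2 ≤ β * ‖h‖ ^ 2} := by
      rw [Submodule.topologicalClosure_coe]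
      exact closure_minimal hsub hclosed
    have := hcl hh
    rw [hproj γ θ h hh]
    exact this
  · intro hfr x₁ hx₁ x₂ hx₂
    rcases Set.mem_iUnion.mp hx₁ with ⟨γ, hγ⟩
    rcases Set.mem_iUnion.mp hx₂ with ⟨θ, hθ⟩
    have hmem : x₁ - x₂ ∈ (S γ ⊔ S θ : Submodule ℂ H) :=
      Submodule.sub_mem _ (Submodule.mem_sup_left hγ) (Submodule.mem_sup_right hθ)
    have hmem' : x₁ - x₂ ∈ (S γ ⊔ S θ : Submodule ℂ H).topologicalClosure :=
      Submodule.le_topologicalClosure _ hmem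
    have := hfr γ θ (x₁ - x₂) hmem'
    rw [hproj γ θ (x₁ - x₂) hmem'] at this
    rwa [map_sub] at this
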